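/- arXiv:1301.6058 — 2 statements merged into one kernel-verified Lean document; each statement's English description precedes it below -/
import Mathlib

section
/- Fix b > 0 and positive weights a_1,…,a_T > 0, and assume 1 + a_t x_tᵀ A_{t−1}^{−1} x_t − a_t ≤ 0 for all t = 1,…,T. Then the cumulative loss of WEMM satisfies Σ_{t=1}^T (y_t − ŷ_t)² ≤ inf_{u ∈ ℝ^d} ( b‖u‖² + Σ_{t=1}^T a_t (y_t − uᵀx_t)² ). Moreover, if 1 + a_t x_tᵀ A_{t−1}^{−1} x_t − a_t = 0 for all t, then this inequality holds with equality. -/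
open Matrix Finset

variable {d : ℕ}

lemma vMv_mulVec (w v u : Fin d → ℝ) : vecMulVec w v *ᵥ u = (v ⬝ᵥ u) • w := by
  funext i
  simp [vecMulVec_apply, mulVec, dotProduct, Finset.sum_mul, Finset.mul_sum, mul_comm, mul_assoc, mul_left_comm]

lemma mul_vMv (M : Matrix (Fin d) (Fin d) ℝ) (w v : Fin d → ℝ) :
    M * vecMulVec w v = vecMulVec (M *ᵥ w) v := by
  ext i j
  simp [vecMulVec_apply, mul_apply, mulVec, dotProduct, Finset.sum_mul, mul_assoc]

lemma vMv_mul (w v : Fin d → ℝ) (M : Matrix (Fin d) (Fin d) ℝ) :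
    vecMulVec w v * M = vecMulVec w (Mᵀ *ᵥ v) := by
  ext i j
  simp [vecMulVec_apply, mul_apply, mulVec, dotProduct, Finset.mul_sum, transpose_apply,
    mul_comm, mul_assoc, mul_left_comm]

lemma vMv_transpose (w v : Fin d → ℝ) : (vecMulVec w v)ᵀ = vecMulVec v w := by
  ext i j; simp [vecMulVec_apply, transpose_apply, mul_comm]

lemma vMv_smul_right (c : ℝ) (w v : Fin d → ℝ) :
    vecMulVec w (c • v) = c • vecMulVec w v := by
  ext i j; simp [vecMulVec_apply, mul_comm, mul_assoc, mul_left_comm]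

lemma vMv_posSemidef (xx : Fin d → ℝ) : (vecMulVec xx xx).PosSemidef := by
  rw [Matrix.posSemidef_iff_dotProduct_mulVec]
  constructor
  · unfold IsHermitian
    ext i j
    simp [conjTranspose_apply, vecMulVec_apply, mul_comm]
  · intro u
    rw [vMv_mulVec]
    simp only [star_trivial, dotProduct_smul, smul_eq_mul]
    rw [dotProduct_comm]
    exact mul_self_nonneg _

lemma dot_sum (u : Fin d → ℝ) {ι : Type*} (s : Finset ι) (f : ι → Fin d → ℝ) :
    u ⬝ᵥ (∑ i ∈ s, f i) = ∑ i ∈ s, u ⬝ᵥ f i := by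
  simp only [dotProduct, Finset.sum_apply, Finset.mul_sum]
  rw [Finset.sum_comm]

lemma sum_mulVec' {ι : Type*} (s : Finset ι) (f : ι → Matrix (Fin d) (Fin d) ℝ)
    (v : Fin d → ℝ) : (∑ i ∈ s, f i) *ᵥ v = ∑ i ∈ s, f i *ᵥ v := by
  funext j
  simp only [mulVec, dotProduct, Finset.sum_apply, Matrix.sum_apply, Finset.sum_mul]
  rw [Finset.sum_comm]

lemma symm_dot (M : Matrix (Fin d) (Fin d) ℝ) (hM : Mᵀ = M) (u w : Fin d → ℝ) :
    u ⬝ᵥ (M *ᵥ w) = w ⬝ᵥ (M *ᵥ u) := by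
  rw [Matrix.dotProduct_mulVec, ← Matrix.mulVec_transpose, hM, dotProduct_comm]

lemma smul_one_posDef {b : ℝ} (hb : 0 < b) : (b • (1 : Matrix (Fin d) (Fin d) ℝ)).PosDef := by
  rw [Matrix.smul_one_eq_diagonal]
  exact Matrix.PosDef.diagonal fun _ => hb

lemma inv_rank_one_update (P : Matrix (Fin d) (Fin d) ℝ) (hP : P.PosDef) (c : ℝ) (hc : 0 < c)
    (xx : Fin d → ℝ) :
    (P + c • vecMulVec xx xx)⁻¹
      = P⁻¹ - (c / (1 + c * (xx ⬝ᵥ (P⁻¹ *ᵥ xx)))) • vecMulVec (P⁻¹ *ᵥ xx) (P⁻¹ *ᵥ xx) := by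
  set Q := P⁻¹ with hQ
  set v := Q *ᵥ xx with hv
  set r := xx ⬝ᵥ v with hr
  have hr0 : 0 ≤ r := by
    have := hP.inv.posSemidef.dotProduct_mulVec_nonneg xx
    simpa [hr, hv, hQ] using this
  have hden : 0 < 1 + c * r := by positivity
  set k := c / (1 + c * r) with hk
  have hPQ : P * Q = 1 := Matrix.mul_nonsing_inv P hP.det_pos.ne'.isUnit
  have hQsym : Qᵀ = Q := by
    have := hP.isHermitian.inv
    simpa [Matrix.IsHermitian, conjTranspose_eq_transpose_of_trivial] using this
  apply Matrix.inv_eq_right_inv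
  have hPv : P *ᵥ v = xx := by
    rw [hv, Matrix.mulVec_mulVec, hPQ, Matrix.one_mulVec]
  have e1 : P * vecMulVec v v = vecMulVec xx v := by rw [mul_vMv, hPv]
  have e2 : vecMulVec xx xx * Q = vecMulVec xx v := by rw [vMv_mul, hQsym, ← hv]
  have e3 : vecMulVec xx xx * vecMulVec v v = r • vecMulVec xx v := by
    rw [vMv_mul, vMv_transpose, vMv_mulVec, vMv_smul_right, dotProduct_comm, ← hr]
  rw [add_mul, mul_sub, mul_sub, Matrix.mul_smul, Matrix.smul_mul, Matrix.smul_mul,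
    Matrix.mul_smul, hPQ, e1, e2, e3]
  have hco : c - (k + c * (k * r)) = 0 := by
    rw [hk]; field_simp; ring
  calc 1 - k • vecMulVec xx v + (c • vecMulVec xx v - c • (k • (r • vecMulVec xx v)))
      = 1 + (c - (k + c * (k * r))) • vecMulVec xx v := by module
    _ = 1 := by rw [hco, zero_smul, add_zero]

lemma tele_sum {T : ℕ} (f g : ℕ → ℝ) (h : ∀ t ∈ Icc 1 T, g t = f t - f (t - 1)) :
    ∑ t ∈ Icc 1 T, g t = f T - f 0 := by
  induction T with
  | zero => simp
  | succ n ih =>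
    rw [Finset.sum_Icc_succ_top (Nat.one_le_iff_ne_zero.mpr (Nat.succ_ne_zero n))]
    rw [ih fun t ht => h t (Finset.Icc_subset_Icc_right (Nat.le_succ n) ht),
      h (n + 1) (by simp)]
    have h1 : n + 1 - 1 = n := by omega
    rw [h1]; ring


lemma smul_psd {c : ℝ} (hc : 0 ≤ c) {M : Matrix (Fin d) (Fin d) ℝ} (hM : M.PosSemidef) :
    (c • M).PosSemidef := by
  rw [Matrix.posSemidef_iff_dotProduct_mulVec]
  constructor
  · unfold Matrix.IsHermitian
    rw [conjTranspose_smul, hM.1]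
    simp
  · intro u
    rw [smul_mulVec, dotProduct_smul, smul_eq_mul]
    exact mul_nonneg hc (hM.dotProduct_mulVec_nonneg u)

-- aux --

/-- if `1 + a_t x_tᵀA_{t−1}⁻¹x_t − a_t ≤ 0` for all `t`, then the
cumulative loss of WEMM is at most `inf_u (b‖u‖² + L_T^a(u))`; with equality if
the condition holds with equality for all `t`. -/
theorem stmt_6 {d T : ℕ} (b : ℝ) (hb : 0 < b)
    (a : ℕ → ℝ) (ha : ∀ s ∈ Icc 1 T, 0 < a s)
    (x : ℕ → (Fin d → ℝ)) (y : ℕ → ℝ)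
    (A : ℕ → Matrix (Fin d) (Fin d) ℝ)
    (hA : ∀ t, A t = b • (1 : Matrix (Fin d) (Fin d) ℝ)
        + ∑ s ∈ Icc 1 t, a s • vecMulVec (x s) (x s))
    (Bv : ℕ → (Fin d → ℝ))
    (hBv : ∀ t, Bv t = ∑ s ∈ Icc 1 t, (a s * y s) • x s)
    (hcond : ∀ t ∈ Icc 1 T, 1 + a t * (x t ⬝ᵥ ((A (t - 1))⁻¹ *ᵥ x t)) - a t ≤ 0) :
    (∑ t ∈ Icc 1 T, (y t - Bv (t - 1) ⬝ᵥ ((A (t - 1))⁻¹ *ᵥ x t)) ^ 2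
      ≤ ⨅ u : Fin d → ℝ,
          (b * (u ⬝ᵥ u) + ∑ t ∈ Icc 1 T, a t * (y t - u ⬝ᵥ x t) ^ 2)) ∧
    ((∀ t ∈ Icc 1 T, 1 + a t * (x t ⬝ᵥ ((A (t - 1))⁻¹ *ᵥ x t)) - a t = 0) →
      ∑ t ∈ Icc 1 T, (y t - Bv (t - 1) ⬝ᵥ ((A (t - 1))⁻¹ *ᵥ x t)) ^ 2
        = ⨅ u : Fin d → ℝ,
            (b * (u ⬝ᵥ u) + ∑ t ∈ Icc 1 T, a t * (y t - u ⬝ᵥ x t) ^ 2)) := by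
  classical
  have hApd : ∀ t, t ≤ T → (A t).PosDef := by
    intro t ht
    rw [hA t]
    refine Matrix.PosDef.add_posSemidef (smul_one_posDef hb) ?_
    refine Finset.sum_induction _ _ (fun _ _ => Matrix.PosSemidef.add) Matrix.PosSemidef.zero ?_
    intro s hs
    have hs' : s ∈ Icc 1 T := Finset.Icc_subset_Icc_right ht hs
    exact smul_psd (ha s hs').le (vMv_posSemidef (x s))
  -- quantities
  set Φ : ℕ → ℝ := fun t => (∑ s ∈ Icc 1 t, a s * y s ^ 2) - Bv t ⬝ᵥ ((A t)⁻¹ *ᵥ Bv t) with hΦ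
  have hΦ0 : Φ 0 = 0 := by
    simp [hΦ, hBv 0]
  have hr_nonneg : ∀ t ∈ Icc 1 T, 0 ≤ x t ⬝ᵥ ((A (t-1))⁻¹ *ᵥ x t) := by
    intro t ht
    obtain ⟨h1, h2⟩ := Finset.mem_Icc.mp ht
    have := ((hApd (t-1) (by omega)).inv.posSemidef).dotProduct_mulVec_nonneg (x t)
    simpa using this
  have hden_pos : ∀ t ∈ Icc 1 T, 0 < 1 + a t * (x t ⬝ᵥ ((A (t-1))⁻¹ *ᵥ x t)) := by
    intro t ht
    have h1 := ha t ht
    have h2 := hr_nonneg t ht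
    positivity
  have key : ∀ t ∈ Icc 1 T,
      Φ t - Φ (t-1) = (a t / (1 + a t * (x t ⬝ᵥ ((A (t-1))⁻¹ *ᵥ x t))))
        * (y t - Bv (t-1) ⬝ᵥ ((A (t-1))⁻¹ *ᵥ x t)) ^ 2 := by
    intro t ht
    have hden := hden_pos t ht
    have hc : 0 < a t := ha t ht
    obtain ⟨h1, h2⟩ := Finset.mem_Icc.mp ht
    obtain ⟨n, rfl⟩ : ∃ n, t = n + 1 := ⟨t - 1, by omega⟩
    have hn1 : n + 1 - 1 = n := by omega
    rw [hn1] at hden ⊢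
    have hPd : (A n).PosDef := hApd n (by omega)
    set c := a (n+1) with hc'
    set xt := x (n+1) with hxt
    set yy := y (n+1) with hyy
    set Q := (A n)⁻¹ with hQ
    set v := Q *ᵥ xt with hv
    set r := xt ⬝ᵥ v with hr
    set Bn := Bv n with hBn
    set yh := Bn ⬝ᵥ v with hyh
    set k := c / (1 + c * r) with hk
    have hQsym : Qᵀ = Q := by
      have := hPd.isHermitian.inv
      simpa [Matrix.IsHermitian, conjTranspose_eq_transpose_of_trivial] using this
    have hstep : A (n+1) = A n + c • vecMulVec xt xt := by
      rw [hA (n+1), hA n, Finset.sum_Icc_succ_top (Nat.le_add_left 1 n), ← add_assoc]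
    have hBstep : Bv (n+1) = Bn + (c * yy) • xt := by
      rw [hBv (n+1), hBn, hBv n, Finset.sum_Icc_succ_top (Nat.le_add_left 1 n)]
    have hInv : (A (n+1))⁻¹ = Q - k • vecMulVec v v := by
      rw [hstep]
      exact inv_rank_one_update (A n) hPd c hc xt
    have hxQB : xt ⬝ᵥ (Q *ᵥ Bn) = yh := symm_dot Q hQsym xt Bn
    have hvB : v ⬝ᵥ Bn = yh := dotProduct_comm v Bn
    have hvx : v ⬝ᵥ xt = r := dotProduct_comm v xt
    have hBAB : Bv (n+1) ⬝ᵥ ((A (n+1))⁻¹ *ᵥ Bv (n+1))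
        = Bn ⬝ᵥ (Q *ᵥ Bn) + 2*(c*yy)*yh + (c*yy)^2*r - k*(yh + c*yy*r)^2 := by
      rw [hInv, hBstep]
      simp only [Matrix.sub_mulVec, Matrix.mulVec_add, Matrix.mulVec_smul,
        Matrix.smul_mulVec, vMv_mulVec, add_dotProduct, dotProduct_add,
        dotProduct_sub, smul_dotProduct, dotProduct_smul, smul_eq_mul]
      rw [hxQB, hvB, hvx]
      ring
    have hC : ∑ s ∈ Icc 1 (n+1), a s * y s ^ 2
        = (∑ s ∈ Icc 1 n, a s * y s ^ 2) + c * yy ^ 2 :=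
      Finset.sum_Icc_succ_top (Nat.le_add_left 1 n) _
    simp only [hΦ, hn1]
    rw [hBAB, hC, hk]
    have hrfl : Bv n ⬝ᵥ (A n)⁻¹ *ᵥ Bv n = Bn ⬝ᵥ Q *ᵥ Bn := rfl
    rw [hrfl]
    have hden' : (1 + c * r) ≠ 0 := ne_of_gt hden
    generalize Bn ⬝ᵥ Q *ᵥ Bn = S
    field_simp
    ring
  have hQphi : ∀ u : Fin d → ℝ,
      b * (u ⬝ᵥ u) + ∑ t ∈ Icc 1 T, a t * (y t - u ⬝ᵥ x t) ^ 2
        = Φ T + (u - (A T)⁻¹ *ᵥ Bv T) ⬝ᵥ (A T *ᵥ (u - (A T)⁻¹ *ᵥ Bv T)) := by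
    intro u
    set us := (A T)⁻¹ *ᵥ Bv T with hus
    have hdet : IsUnit (A T).det := (hApd T le_rfl).det_pos.ne'.isUnit
    have hAus : A T *ᵥ us = Bv T := by
      rw [hus, Matrix.mulVec_mulVec, Matrix.mul_nonsing_inv _ hdet, Matrix.one_mulVec]
    have hATsym : (A T)ᵀ = A T := by
      have := (hApd T le_rfl).isHermitian
      simpa [Matrix.IsHermitian, conjTranspose_eq_transpose_of_trivial] using this
    have e2 : u ⬝ᵥ Bv T = ∑ s ∈ Icc 1 T, (a s * y s) * (x s ⬝ᵥ u) := by
      rw [hBv T, dot_sum]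
      refine Finset.sum_congr rfl fun s _ => ?_
      rw [dotProduct_smul, smul_eq_mul, dotProduct_comm]
    have e1 : u ⬝ᵥ (A T *ᵥ u) = b * (u ⬝ᵥ u) + ∑ s ∈ Icc 1 T, a s * (x s ⬝ᵥ u) ^ 2 := by
      rw [hA T, Matrix.add_mulVec, dotProduct_add, Matrix.smul_mulVec,
        Matrix.one_mulVec, dotProduct_smul, smul_eq_mul]
      congr 1
      rw [sum_mulVec', dot_sum]
      refine Finset.sum_congr rfl fun s _ => ?_
      rw [Matrix.smul_mulVec, vMv_mulVec, dotProduct_smul, dotProduct_smul,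
        smul_eq_mul, smul_eq_mul, dotProduct_comm]
      ring
    have hsum : ∑ t ∈ Icc 1 T, a t * (y t - u ⬝ᵥ x t) ^ 2
        = (∑ s ∈ Icc 1 T, a s * y s ^ 2) - 2 * (u ⬝ᵥ Bv T)
          + ∑ s ∈ Icc 1 T, a s * (x s ⬝ᵥ u) ^ 2 := by
      rw [e2, Finset.mul_sum, ← Finset.sum_sub_distrib, ← Finset.sum_add_distrib]
      refine Finset.sum_congr rfl fun s _ => ?_
      rw [dotProduct_comm u (x s)]
      ring
    have e4 : (u - us) ⬝ᵥ (A T *ᵥ (u - us))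
        = u ⬝ᵥ (A T *ᵥ u) - 2 * (u ⬝ᵥ Bv T) + Bv T ⬝ᵥ us := by
      have h1 : us ⬝ᵥ (A T *ᵥ u) = u ⬝ᵥ (A T *ᵥ us) := symm_dot _ hATsym us u
      rw [sub_dotProduct, Matrix.mulVec_sub, dotProduct_sub, dotProduct_sub, h1, hAus,
        dotProduct_comm us (Bv T)]
      ring
    rw [hsum, e4, e1]
    simp only [hΦ]
    ring
  -- the infimum equals Φ T
  have hpsd : ∀ w : Fin d → ℝ, 0 ≤ w ⬝ᵥ (A T *ᵥ w) := by
    intro w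
    have := (hApd T le_rfl).posSemidef.dotProduct_mulVec_nonneg w
    simpa using this
  have hbdd : BddBelow (Set.range fun u : Fin d → ℝ =>
      b * (u ⬝ᵥ u) + ∑ t ∈ Icc 1 T, a t * (y t - u ⬝ᵥ x t) ^ 2) := by
    refine ⟨Φ T, ?_⟩
    rintro _ ⟨u, rfl⟩
    exact le_of_le_of_eq (le_add_of_nonneg_right (hpsd (u - (A T)⁻¹ *ᵥ Bv T))) (hQphi u).symm
  have hInf : (⨅ u : Fin d → ℝ,
      (b * (u ⬝ᵥ u) + ∑ t ∈ Icc 1 T, a t * (y t - u ⬝ᵥ x t) ^ 2)) = Φ T := by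
    apply le_antisymm
    · refine le_trans (ciInf_le hbdd ((A T)⁻¹ *ᵥ Bv T)) ?_
      rw [hQphi]
      simp
    · exact le_ciInf fun u =>
        le_of_le_of_eq (le_add_of_nonneg_right (hpsd (u - (A T)⁻¹ *ᵥ Bv T))) (hQphi u).symm
  -- telescoping
  have htele : ∑ t ∈ Icc 1 T, (a t / (1 + a t * (x t ⬝ᵥ ((A (t-1))⁻¹ *ᵥ x t))))
      * (y t - Bv (t-1) ⬝ᵥ ((A (t-1))⁻¹ *ᵥ x t)) ^ 2 = Φ T := by
    rw [tele_sum Φ _ (fun t ht => (key t ht).symm), hΦ0, sub_zero]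
  constructor
  · rw [hInf, ← htele]
    refine Finset.sum_le_sum fun t ht => ?_
    have h1 : 1 ≤ a t / (1 + a t * (x t ⬝ᵥ ((A (t-1))⁻¹ *ᵥ x t))) := by
      rw [le_div_iff₀ (hden_pos t ht)]
      have := hcond t ht
      linarith
    nlinarith [sq_nonneg (y t - Bv (t-1) ⬝ᵥ ((A (t-1))⁻¹ *ᵥ x t))]
  · intro heq
    rw [hInf, ← htele]
    refine Finset.sum_congr rfl fun t ht => ?_
    have hd := heq t ht
    have hden := hden_pos t ht
    have hda : 1 + a t * (x t ⬝ᵥ ((A (t-1))⁻¹ *ᵥ x t)) = a t := by linarith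
    rw [hda, div_self (by linarith)]
    ring
end

section
/- Assume ‖x_t‖ ≤ 1 for all t = 1,…,T, b > 1, c > 0 with 1/b + 1/c < 1. Let a_t = 1/(1 − x_tᵀ A_{t−1}^{−1} x_t) and ã_t = 1/(1 − x_tᵀ A_{t−1}^{−1} x_t − c^{−1}‖x_t‖²), which are well-defined and positive. Then the cumulative loss of WEMM satisfies L_T(WEMM) ≤ inf over all (u_1,…,u_T, ū) ∈ (ℝ^d)^{T+1} of ( b‖ū‖² + c·Σ_{t=1}^T ‖u_t − ū‖² + Σ_{t=1}^T ã_t (y_t − u_tᵀx_t)² ). -/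
open Matrix Finset

lemma aux_dp_nonneg {d : ℕ} (v : Fin d → ℝ) : 0 ≤ v ⬝ᵥ v := by
  simpa [star_trivial] using dotProduct_star_self_nonneg v

lemma aux_cauchy {d : ℕ} (x w : Fin d → ℝ) : (x ⬝ᵥ w) ^ 2 ≤ (x ⬝ᵥ x) * (w ⬝ᵥ w) := by
  have := Finset.sum_mul_sq_le_sq_mul_sq Finset.univ x w
  simpa [dotProduct, sq] using this

lemma aux_posdef {d : ℕ} {b : ℝ} (hb : 0 < b) {M : Matrix (Fin d) (Fin d) ℝ}
    (hsym : Mᵀ = M) (hlb : ∀ z, b * (z ⬝ᵥ z) ≤ z ⬝ᵥ (M *ᵥ z)) : M.PosDef := by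
  refine Matrix.PosDef.of_dotProduct_mulVec_pos (by simpa [Matrix.IsHermitian] using hsym) fun z hz => ?_
  have h1 : 0 < z ⬝ᵥ z := by
    rcases lt_or_eq_of_le (aux_dp_nonneg z) with h | h
    · exact h
    · exact absurd (dotProduct_self_eq_zero.mp h.symm) hz
  have h2 := hlb z
  simpa [star_trivial] using lt_of_lt_of_le (by positivity) h2

lemma aux_isunit {d : ℕ} {b : ℝ} (hb : 0 < b) {M : Matrix (Fin d) (Fin d) ℝ}
    (hsym : Mᵀ = M) (hlb : ∀ z, b * (z ⬝ᵥ z) ≤ z ⬝ᵥ (M *ᵥ z)) : IsUnit M.det :=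
  (Matrix.isUnit_iff_isUnit_det M).mp (aux_posdef hb hsym hlb).isUnit

lemma aux_cancel {d : ℕ} {M : Matrix (Fin d) (Fin d) ℝ} (h : IsUnit M.det)
    (v : Fin d → ℝ) : M *ᵥ (M⁻¹ *ᵥ v) = v := by
  rw [Matrix.mulVec_mulVec, Matrix.mul_nonsing_inv M h, Matrix.one_mulVec]

lemma aux_cancel' {d : ℕ} {M : Matrix (Fin d) (Fin d) ℝ} (h : IsUnit M.det)
    (v : Fin d → ℝ) : M⁻¹ *ᵥ (M *ᵥ v) = v := by
  rw [Matrix.mulVec_mulVec, Matrix.nonsing_inv_mul M h, Matrix.one_mulVec]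

lemma aux_symm_dot {d : ℕ} {M : Matrix (Fin d) (Fin d) ℝ} (hsym : Mᵀ = M)
    (u v : Fin d → ℝ) : u ⬝ᵥ (M *ᵥ v) = (M *ᵥ u) ⬝ᵥ v := by
  rw [Matrix.dotProduct_mulVec, ← Matrix.vecMul_transpose, hsym]

lemma aux_inv_bound {d : ℕ} {b : ℝ} (hb : 0 < b) {M : Matrix (Fin d) (Fin d) ℝ}
    (hsym : Mᵀ = M) (hlb : ∀ z, b * (z ⬝ᵥ z) ≤ z ⬝ᵥ (M *ᵥ z)) (x : Fin d → ℝ) :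
    0 ≤ x ⬝ᵥ (M⁻¹ *ᵥ x) ∧ b * (x ⬝ᵥ (M⁻¹ *ᵥ x)) ≤ x ⬝ᵥ x := by
  have hdet := aux_isunit hb hsym hlb
  set w := M⁻¹ *ᵥ x with hw
  have hMw : M *ᵥ w = x := aux_cancel hdet x
  have hq : x ⬝ᵥ w = w ⬝ᵥ (M *ᵥ w) := by
    rw [← hMw, aux_symm_dot hsym]
  have hq0 : 0 ≤ x ⬝ᵥ w := by
    rw [hq]
    exact le_trans (mul_nonneg hb.le (aux_dp_nonneg w)) (hlb w)
  refine ⟨hq0, ?_⟩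
  have hcs := aux_cauchy x w
  have hlbw := hlb w
  have hwn := aux_dp_nonneg w
  have hxn := aux_dp_nonneg x
  rcases eq_or_lt_of_le hq0 with h | h
  · rw [← h]; simpa using hxn
  · nlinarith [mul_le_mul_of_nonneg_left hcs hb.le,
      mul_le_mul_of_nonneg_left hlbw hxn]

lemma aux_harmonic {A B a p q : ℝ} (hA : 0 < A) (hB : 0 < B)
    (ha : a * (B + A) = A * B) : a * (p + q) ^ 2 ≤ A * p ^ 2 + B * q ^ 2 := by
  nlinarith [sq_nonneg (A * p - B * q), sq_nonneg (p + q), mul_pos hA hB]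

lemma aux_vv_mulVec {d : ℕ} (u w z : Fin d → ℝ) :
    (vecMulVec u w) *ᵥ z = (w ⬝ᵥ z) • u := by
  ext i
  simp only [Matrix.mulVec, Matrix.vecMulVec_apply, dotProduct, Pi.smul_apply,
    smul_eq_mul, Finset.sum_mul]
  exact Finset.sum_congr rfl fun j _ => by ring

lemma aux_vv_transpose {d : ℕ} (u : Fin d → ℝ) :
    (vecMulVec u u)ᵀ = vecMulVec u u := by
  ext i j
  simp [Matrix.vecMulVec_apply, Matrix.transpose_apply, mul_comm]

set_option maxHeartbeats 2000000 in
/-- the cumulative loss of WEMM is at most the infimum over all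
tuples `(u_1,…,u_T, ū)` of `b‖ū‖² + c·Σ‖u_t − ū‖² + Σ ã_t (y_t − u_tᵀx_t)²`. -/
theorem stmt_15 {d T : ℕ} (b c : ℝ) (hb : 1 < b) (hc : 0 < c)
    (hbc : 1 / b + 1 / c < 1)
    (x : ℕ → (Fin d → ℝ)) (hx : ∀ t ∈ Icc 1 T, x t ⬝ᵥ x t ≤ 1)
    (y : ℕ → ℝ)
    (a atil : ℕ → ℝ) (A : ℕ → Matrix (Fin d) (Fin d) ℝ)
    (hA0 : A 0 = b • (1 : Matrix (Fin d) (Fin d) ℝ))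
    (ha : ∀ t ∈ Icc 1 T, a t = 1 / (1 - x t ⬝ᵥ ((A (t - 1))⁻¹ *ᵥ x t)))
    (hArec : ∀ t ∈ Icc 1 T, A t = A (t - 1) + a t • vecMulVec (x t) (x t))
    (hatil : ∀ t ∈ Icc 1 T,
      atil t = 1 / (1 - x t ⬝ᵥ ((A (t - 1))⁻¹ *ᵥ x t) - c⁻¹ * (x t ⬝ᵥ x t)))
    (Bv : ℕ → (Fin d → ℝ))
    (hBv : ∀ t, Bv t = ∑ s ∈ Icc 1 t, (a s * y s) • x s) :
    ∑ t ∈ Icc 1 T, (y t - Bv (t - 1) ⬝ᵥ ((A (t - 1))⁻¹ *ᵥ x t)) ^ 2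
      ≤ ⨅ p : (ℕ → Fin d → ℝ) × (Fin d → ℝ),
          (b * (p.2 ⬝ᵥ p.2)
            + c * ∑ t ∈ Icc 1 T, ((p.1 t - p.2) ⬝ᵥ (p.1 t - p.2))
            + ∑ t ∈ Icc 1 T, atil t * (y t - p.1 t ⬝ᵥ x t) ^ 2) := by
  have hb0 : (0 : ℝ) < b := lt_trans one_pos hb
  have hmem : ∀ s : ℕ, s + 1 ≤ T → s + 1 ∈ Icc 1 T := by
    intro s hs; simp only [mem_Icc]; omega
  -- the quadratic lower bound and symmetry, by induction
  have key : ∀ t, t ≤ T →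
      ((A t)ᵀ = A t ∧ ∀ z, b * (z ⬝ᵥ z) ≤ z ⬝ᵥ (A t *ᵥ z)) := by
    intro t
    induction t with
    | zero =>
      intro _
      refine ⟨by rw [hA0]; simp, fun z => ?_⟩
      rw [hA0, Matrix.smul_mulVec, Matrix.one_mulVec]
      rw [dotProduct_smul, smul_eq_mul]
    | succ s ih =>
      intro hsT
      obtain ⟨hsymS, hlbS⟩ := ih (Nat.le_of_succ_le hsT)
      have ht : s + 1 ∈ Icc 1 T := hmem s hsT
      have hrec : A (s + 1) = A s + a (s + 1) • vecMulVec (x (s + 1)) (x (s + 1)) :=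
        hArec (s + 1) ht
      have hinv := aux_inv_bound hb0 hsymS hlbS (x (s + 1))
      have hn1 : x (s + 1) ⬝ᵥ x (s + 1) ≤ 1 := hx (s + 1) ht
      have hr1 : x (s + 1) ⬝ᵥ ((A s)⁻¹ *ᵥ x (s + 1)) < 1 := by
        nlinarith [hinv.1, hinv.2]
      have haS : a (s + 1) = 1 / (1 - x (s + 1) ⬝ᵥ ((A s)⁻¹ *ᵥ x (s + 1))) :=
        ha (s + 1) ht
      have hapos : 0 < a (s + 1) := by
        rw [haS]
        exact one_div_pos.mpr (by linarith)
      constructor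
      · rw [hrec, Matrix.transpose_add, Matrix.transpose_smul, aux_vv_transpose, hsymS]
      · intro z
        rw [hrec, Matrix.add_mulVec, Matrix.smul_mulVec, aux_vv_mulVec]
        rw [dotProduct_add, dotProduct_smul, dotProduct_smul, smul_eq_mul, smul_eq_mul]
        have h1 := hlbS z
        have h2 : 0 ≤ a (s + 1) * ((x (s + 1) ⬝ᵥ z) * (z ⬝ᵥ x (s + 1))) := by
          rw [dotProduct_comm (x (s+1)) z]
          exact mul_nonneg hapos.le (mul_self_nonneg _)
        linarith
  have hdet : ∀ t, t ≤ T → IsUnit (A t).det := fun t ht =>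
    aux_isunit hb0 (key t ht).1 (key t ht).2
  -- solution vectors
  set W : ℕ → Fin d → ℝ := fun t => (A t)⁻¹ *ᵥ Bv t with hWdef
  have hAW : ∀ t, t ≤ T → A t *ᵥ W t = Bv t := fun t ht => aux_cancel (hdet t ht) _
  set P : ℕ → ℝ := fun t => (∑ s ∈ Icc 1 t, a s * y s ^ 2) - Bv t ⬝ᵥ W t with hPdef
  have hBv0 : Bv 0 = 0 := by rw [hBv]; simp
  have hP0 : P 0 = 0 := by simp [hPdef, hBv0]
  -- per-round telescoping identity
  have hround : ∀ s : ℕ, s + 1 ≤ T →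
      P (s + 1) = P s + (y (s + 1) - Bv s ⬝ᵥ ((A s)⁻¹ *ᵥ x (s + 1))) ^ 2 := by
    intro s hsT
    have ht : s + 1 ∈ Icc 1 T := hmem s hsT
    have hsT' : s ≤ T := Nat.le_of_succ_le hsT
    obtain ⟨hsymS, hlbS⟩ := key s hsT'
    have hdetS : IsUnit (A s).det := hdet s hsT'
    set v := (A s)⁻¹ *ᵥ x (s + 1) with hv
    set r := x (s + 1) ⬝ᵥ v with hr
    have hinv := aux_inv_bound hb0 hsymS hlbS (x (s + 1))
    have hn1 : x (s + 1) ⬝ᵥ x (s + 1) ≤ 1 := hx (s + 1) ht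
    have hr1 : r < 1 := by nlinarith [hinv.1, hinv.2]
    have hrne : (1 : ℝ) - r ≠ 0 := by linarith
    have haS : a (s + 1) = 1 / (1 - r) := by
      have h0 : a (s + 1) = 1 / (1 - x (s + 1) ⬝ᵥ ((A s)⁻¹ *ᵥ x (s + 1))) :=
        ha (s + 1) ht
      rw [h0, ← hv, ← hr]
    have haf : a (s + 1) * (1 - r) = 1 := by
      rw [haS, one_div, inv_mul_cancel₀ hrne]
    set aa := a (s + 1) with haa
    set e := y (s + 1) - x (s + 1) ⬝ᵥ W (s + 1) with he
    set yh := Bv s ⬝ᵥ v with hyh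
    have hBr : Bv (s + 1) = Bv s + (aa * y (s + 1)) • x (s + 1) := by
      rw [hBv, hBv, Finset.sum_Icc_succ_top (by omega)]
    have hAr : A (s + 1) = A s + aa • vecMulVec (x (s + 1)) (x (s + 1)) :=
      hArec (s + 1) ht
    -- A s (W(s+1) - W s) = (aa * e) • x(s+1)
    have h4 : A s *ᵥ (W (s + 1) - W s) = (aa * e) • x (s + 1) := by
      have e1 : A (s + 1) *ᵥ W (s + 1) = Bv (s + 1) := hAW (s + 1) hsT
      rw [hAr, Matrix.add_mulVec, Matrix.smul_mulVec, aux_vv_mulVec] at e1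
      have e2 : A s *ᵥ W s = Bv s := hAW s hsT'
      rw [Matrix.mulVec_sub, e2]
      have e3 : A s *ᵥ W (s + 1)
          = Bv s + (aa * y (s + 1)) • x (s + 1)
            - aa • (x (s + 1) ⬝ᵥ W (s + 1)) • x (s + 1) := by
        rw [← hBr]
        exact eq_sub_of_add_eq e1
      rw [e3]
      ext i
      simp only [Pi.add_apply, Pi.sub_apply, Pi.smul_apply, smul_eq_mul, he]
      ring
    have h5 : W (s + 1) - W s = (aa * e) • v := by
      have := congrArg (fun z => (A s)⁻¹ *ᵥ z) h4
      simpa [aux_cancel' hdetS, Matrix.mulVec_smul] using this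
    have h7 : yh = x (s + 1) ⬝ᵥ W s := by
      have hsyminv : ((A s)⁻¹)ᵀ = (A s)⁻¹ := by
        rw [Matrix.transpose_nonsing_inv, hsymS]
      rw [hyh, hv, aux_symm_dot hsyminv, dotProduct_comm]
    have h6 : x (s + 1) ⬝ᵥ W (s + 1) = yh + aa * e * r := by
      have := congrArg (fun z => x (s + 1) ⬝ᵥ z) h5
      simp only [dotProduct_sub, dotProduct_smul, smul_eq_mul] at this
      rw [h7]
      linarith [this]
    have h8 : aa * e = y (s + 1) - yh := by
      have h6' : e = y (s + 1) - yh - aa * e * r := by linear_combination he - h6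
      linear_combination h6' + e * haf
    -- dot product expansions
    have hBW : Bv (s + 1) ⬝ᵥ W (s + 1)
        = Bv s ⬝ᵥ W s + aa * e * yh + aa * y (s + 1) * (x (s + 1) ⬝ᵥ W (s + 1)) := by
      have e1 : Bv (s + 1) ⬝ᵥ W (s + 1)
          = Bv s ⬝ᵥ W (s + 1) + aa * y (s + 1) * (x (s + 1) ⬝ᵥ W (s + 1)) := by
        rw [hBr, add_dotProduct, smul_dotProduct, smul_eq_mul]
      have e2 : Bv s ⬝ᵥ W (s + 1) = Bv s ⬝ᵥ W s + aa * e * yh := by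
        have : W (s + 1) = W s + (aa * e) • v := by
          rw [← h5]; abel
        rw [this, dotProduct_add, dotProduct_smul, smul_eq_mul, hyh]
      rw [e1, e2]
    have hsum1 : (∑ u ∈ Icc 1 (s + 1), a u * y u ^ 2)
        = (∑ u ∈ Icc 1 s, a u * y u ^ 2) + aa * y (s + 1) ^ 2 :=
      Finset.sum_Icc_succ_top (by omega) _
    have hPs : P (s + 1) - P s
        = aa * y (s + 1) ^ 2 - (aa * e * yh + aa * y (s + 1) * (x (s + 1) ⬝ᵥ W (s + 1))) := by
      simp only [hPdef]
      rw [hsum1, hBW]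
      ring
    have hxw : x (s + 1) ⬝ᵥ W (s + 1) = y (s + 1) - e := by rw [he]; ring
    have hgoal : P (s + 1) - P s = (y (s + 1) - yh) ^ 2 := by
      rw [hPs, hxw]
      linear_combination (y (s + 1) - yh) * h8
    rw [hyh, hv] at hgoal
    linarith [hgoal]
  -- cumulative identity
  have hsum : ∀ t, t ≤ T →
      (∑ s ∈ Icc 1 t, (y s - Bv (s - 1) ⬝ᵥ ((A (s - 1))⁻¹ *ᵥ x s)) ^ 2) = P t := by
    intro t
    induction t with
    | zero => intro _; simp [hP0]
    | succ s ih =>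
      intro hsT
      rw [Finset.sum_Icc_succ_top (by omega), ih (Nat.le_of_succ_le hsT),
        hround s hsT]
      simp only [Nat.add_sub_cancel]
  -- quadratic expansion of A T
  have hquadA : ∀ t, t ≤ T → ∀ z : Fin d → ℝ,
      z ⬝ᵥ (A t *ᵥ z) = b * (z ⬝ᵥ z) + ∑ s ∈ Icc 1 t, a s * (x s ⬝ᵥ z) ^ 2 := by
    intro t
    induction t with
    | zero =>
      intro _ z
      rw [hA0, Matrix.smul_mulVec, Matrix.one_mulVec, dotProduct_smul, smul_eq_mul]
      simp
    | succ s ih =>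
      intro hsT z
      have ht : s + 1 ∈ Icc 1 T := hmem s hsT
      have hrec : A (s + 1) = A s + a (s + 1) • vecMulVec (x (s + 1)) (x (s + 1)) :=
        hArec (s + 1) ht
      rw [hrec, Matrix.add_mulVec, Matrix.smul_mulVec, aux_vv_mulVec,
        dotProduct_add, dotProduct_smul, dotProduct_smul, smul_eq_mul, smul_eq_mul,
        ih (Nat.le_of_succ_le hsT), Finset.sum_Icc_succ_top (by omega)]
      rw [dotProduct_comm z (x (s + 1))]
      ring
  -- linear expansion of Bv T
  have hdotB : ∀ z : Fin d → ℝ,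
      z ⬝ᵥ Bv T = ∑ s ∈ Icc 1 T, a s * y s * (x s ⬝ᵥ z) := by
    intro z
    rw [hBv]
    have hgen : ∀ F : Finset ℕ,
        z ⬝ᵥ (∑ s ∈ F, (a s * y s) • x s) = ∑ s ∈ F, a s * y s * (x s ⬝ᵥ z) := by
      intro F
      induction F using Finset.induction_on with
      | empty => simp
      | insert _ _ hnm ih =>
        rw [Finset.sum_insert hnm, dotProduct_add, ih, Finset.sum_insert hnm,
          dotProduct_smul, smul_eq_mul, dotProduct_comm]
    exact hgen _
  -- P T is at most the regularized loss of any comparator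
  have hPT : ∀ ub : Fin d → ℝ,
      P T ≤ b * (ub ⬝ᵥ ub) + ∑ t ∈ Icc 1 T, a t * (y t - ub ⬝ᵥ x t) ^ 2 := by
    intro ub
    have hsymT := (key T le_rfl).1
    have hlbT := (key T le_rfl).2
    have hAWT : A T *ᵥ W T = Bv T := hAW T le_rfl
    set z := ub - W T with hz
    have hq : z ⬝ᵥ (A T *ᵥ z)
        = ub ⬝ᵥ (A T *ᵥ ub) - 2 * (ub ⬝ᵥ Bv T) + Bv T ⬝ᵥ W T := by
      have c1 : W T ⬝ᵥ (A T *ᵥ ub) = Bv T ⬝ᵥ ub := by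
        rw [aux_symm_dot hsymT, hAWT]
      have c2 : ub ⬝ᵥ (A T *ᵥ W T) = ub ⬝ᵥ Bv T := by rw [hAWT]
      have c3 : W T ⬝ᵥ (A T *ᵥ W T) = W T ⬝ᵥ Bv T := by rw [hAWT]
      rw [hz, Matrix.mulVec_sub, dotProduct_sub, sub_dotProduct, sub_dotProduct,
        c1, c2, c3, dotProduct_comm (Bv T) ub, dotProduct_comm (W T) (Bv T)]
      ring
    have hq0 : 0 ≤ z ⬝ᵥ (A T *ᵥ z) :=
      le_trans (mul_nonneg hb0.le (aux_dp_nonneg z)) (hlbT z)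
    have hexp : (∑ t ∈ Icc 1 T, a t * (y t - ub ⬝ᵥ x t) ^ 2)
        = (∑ t ∈ Icc 1 T, a t * y t ^ 2) - 2 * (ub ⬝ᵥ Bv T)
          + (∑ t ∈ Icc 1 T, a t * (x t ⬝ᵥ ub) ^ 2) := by
      rw [hdotB, Finset.mul_sum, ← Finset.sum_sub_distrib, ← Finset.sum_add_distrib]
      refine Finset.sum_congr rfl fun t _ => ?_
      rw [dotProduct_comm (x t) ub]
      ring
    have hAub := hquadA T le_rfl ub
    simp only [hPdef]
    have hBW' : Bv T ⬝ᵥ W T = W T ⬝ᵥ Bv T := dotProduct_comm _ _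
    nlinarith [hq, hq0, hexp, hAub]
  -- pointwise comparison of losses
  have hpt : ∀ t, t ∈ Icc 1 T → ∀ u ub : Fin d → ℝ,
      a t * (y t - ub ⬝ᵥ x t) ^ 2
        ≤ c * ((u - ub) ⬝ᵥ (u - ub)) + atil t * (y t - u ⬝ᵥ x t) ^ 2 := by
    intro t htm u ub
    obtain ⟨ht1, ht2⟩ := mem_Icc.mp htm
    obtain ⟨s, rfl⟩ : ∃ s, t = s + 1 := ⟨t - 1, by omega⟩
    obtain ⟨hsymS, hlbS⟩ := key s (Nat.le_of_succ_le ht2)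
    have hinv := aux_inv_bound hb0 hsymS hlbS (x (s + 1))
    set n := x (s + 1) ⬝ᵥ x (s + 1) with hn
    set r := x (s + 1) ⬝ᵥ ((A s)⁻¹ *ᵥ x (s + 1)) with hrd
    have hr0 : 0 ≤ r := hinv.1
    have hbr : b * r ≤ n := hinv.2
    have hn0 : 0 ≤ n := aux_dp_nonneg _
    have hn1 : n ≤ 1 := hx (s + 1) htm
    have hij : (0 : ℝ) ≤ 1 / b + 1 / c := by positivity
    have e1 : r ≤ n * (1 / b) := by
      rw [mul_one_div]
      exact (le_div_iff₀ hb0).mpr (by linarith)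
    have e2 : c⁻¹ * n = n * (1 / c) := by ring
    have hD : 0 < 1 - r - c⁻¹ * n := by
      have e3 : n * (1 / b + 1 / c) ≤ 1 * (1 / b + 1 / c) :=
        mul_le_mul_of_nonneg_right hn1 hij
      nlinarith
    have hr1 : r < 1 := by nlinarith
    have hrne : (1 : ℝ) - r ≠ 0 := by linarith
    have hDne : 1 - r - c⁻¹ * n ≠ 0 := ne_of_gt hD
    have haS : a (s + 1) = 1 / (1 - r) := ha (s + 1) htm
    have hatS : atil (s + 1) = 1 / (1 - r - c⁻¹ * n) := hatil (s + 1) htm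
    have hapos : 0 < a (s + 1) := by rw [haS]; exact one_div_pos.mpr (by linarith)
    have hatpos : 0 < atil (s + 1) := by rw [hatS]; exact one_div_pos.mpr hD
    set q := (u - ub) ⬝ᵥ x (s + 1) with hq
    set m := (u - ub) ⬝ᵥ (u - ub) with hm
    set p := y (s + 1) - u ⬝ᵥ x (s + 1) with hp
    have hm0 : 0 ≤ m := aux_dp_nonneg _
    have hq2 : q ^ 2 ≤ n * m := by
      have := aux_cauchy (x (s + 1)) (u - ub)
      rw [dotProduct_comm] at this
      exact this
    have hsplit : y (s + 1) - ub ⬝ᵥ x (s + 1) = p + q := by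
      rw [hp, hq, sub_dotProduct]; ring
    rw [hsplit]
    clear_value n r q m p
    rcases eq_or_lt_of_le hn0 with hn_eq | hn_pos
    · -- n = 0 : then q = 0 and a = atil
      have hq0 : q = 0 := by
        have : q ^ 2 ≤ 0 := by rw [← hn_eq] at hq2; linarith
        exact pow_eq_zero_iff (by norm_num) |>.mp (le_antisymm this (sq_nonneg q))
      have haeq : a (s + 1) = atil (s + 1) := by
        rw [haS, hatS, ← hn_eq]; ring_nf
      rw [hq0, add_zero, haeq]
      linarith [mul_nonneg hc.le hm0]
    · -- n > 0
      have hBpos : 0 < c / n := div_pos hc hn_pos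
      have hnne : n ≠ 0 := ne_of_gt hn_pos
      have hcne : c ≠ 0 := ne_of_gt hc
      have hci : c * c⁻¹ = 1 := mul_inv_cancel₀ hcne
      have hni : n * n⁻¹ = 1 := mul_inv_cancel₀ hnne
      have haf : a (s + 1) * (1 - r) = 1 := by
        rw [haS, one_div, inv_mul_cancel₀ hrne]
      have hataf : atil (s + 1) * (1 - r - c⁻¹ * n) = 1 := by
        rw [hatS, one_div, inv_mul_cancel₀ hDne]
      have h1 : a (s + 1) * (c + n * atil (s + 1)) = atil (s + 1) * c := by
        linear_combination (atil (s + 1) * c) * haf - (a (s + 1) * c) * hataf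
          - (a (s + 1) * atil (s + 1) * n) * hci
      have hrel : a (s + 1) * (c / n + atil (s + 1)) = atil (s + 1) * (c / n) := by
        rw [div_eq_mul_inv]
        linear_combination n⁻¹ * h1 - (a (s + 1) * atil (s + 1)) * hni
      have hharm := aux_harmonic hatpos hBpos hrel (p := p) (q := q)
      have hlast : c / n * q ^ 2 ≤ c * m := by
        have e4 : c / n * q ^ 2 ≤ c / n * (n * m) :=
          mul_le_mul_of_nonneg_left hq2 hBpos.le
        have e5 : c / n * (n * m) = c * m := by
          field_simp
        linarith
      nlinarith [hharm, hlast]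
  -- final assembly
  refine le_ciInf fun pr => ?_
  obtain ⟨u, ub⟩ := pr
  simp only
  calc (∑ t ∈ Icc 1 T, (y t - Bv (t - 1) ⬝ᵥ ((A (t - 1))⁻¹ *ᵥ x t)) ^ 2)
      = P T := hsum T le_rfl
    _ ≤ b * (ub ⬝ᵥ ub) + ∑ t ∈ Icc 1 T, a t * (y t - ub ⬝ᵥ x t) ^ 2 := hPT ub
    _ ≤ b * (ub ⬝ᵥ ub) + ∑ t ∈ Icc 1 T,
          (c * ((u t - ub) ⬝ᵥ (u t - ub)) + atil t * (y t - u t ⬝ᵥ x t) ^ 2) := by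
        refine add_le_add_right (Finset.sum_le_sum fun t htm => hpt t htm (u t) ub) _
    _ = b * (ub ⬝ᵥ ub) + c * (∑ t ∈ Icc 1 T, ((u t - ub) ⬝ᵥ (u t - ub)))
          + ∑ t ∈ Icc 1 T, atil t * (y t - u t ⬝ᵥ x t) ^ 2 := by
        rw [Finset.sum_add_distrib, Finset.mul_sum]
        ring
end
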